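/- Let n ≥ 1, r₁ > 0, x ∈ ℝⁿ, and let h be a twice continuously differentiable function on an open neighborhood of B_∞(x, r₁) satisfying ‖∇h(y)‖_∞ ≤ L for all y ∈ B_∞(x, r₁). Then the average of the Laplacian of h over B_∞(x, r₁) is at most nL/r₁, i.e. (1/(2r₁)ⁿ) ∫_{B_∞(x,r₁)} Δh(y) dy ≤ nL/r₁. -/

import Mathlib

open MeasureTheory

/-- The closed `ℓ∞`-ball of radius `r` around `x` in `ℝⁿ`. -/
def Binf {n : ℕ} (x : EuclideanSpace ℝ (Fin n)) (r : ℝ) : Set (EuclideanSpace ℝ (Fin n)) :=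
  {z | ∀ i, |z i - x i| ≤ r}

/-- The Laplacian `Δh(z) = ∑ i, ∂²h/∂xᵢ²(z)`. -/
noncomputable def laplacian {n : ℕ} (h : EuclideanSpace ℝ (Fin n) → ℝ)
    (z : EuclideanSpace ℝ (Fin n)) : ℝ :=
  ∑ i, fderiv ℝ (fun w => fderiv ℝ h w (EuclideanSpace.single i 1)) z (EuclideanSpace.single i 1)

open Set in
theorem stmt2' {m : ℕ} (r₁ L : ℝ) (hr₁ : 0 < r₁)
    (x : EuclideanSpace ℝ (Fin (m+1))) (h : EuclideanSpace ℝ (Fin (m+1)) → ℝ)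
    (U : Set (EuclideanSpace ℝ (Fin (m+1)))) (hU : IsOpen U) (hBU : Binf x r₁ ⊆ U)
    (hh : ContDiffOn ℝ 2 h U)
    (hL : ∀ y ∈ Binf x r₁, ∀ i, |gradient h y i| ≤ L) :
    ((2 * r₁) ^ (m+1))⁻¹ * ∫ y in Binf x r₁, laplacian h y ≤ (m+1) * L / r₁ := by
  classical
  let E := EuclideanSpace ℝ (Fin (m+1))
  let ψ : (Fin (m+1) → ℝ) ≃L[ℝ] E := (EuclideanSpace.equiv (Fin (m+1)) ℝ).symm
  set a : Fin (m+1) → ℝ := fun i => x i - r₁ with ha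
  set b : Fin (m+1) → ℝ := fun i => x i + r₁ with hb
  have hle : a ≤ b := fun i => by simp [ha, hb]; linarith
  have hIccB : ∀ z : Fin (m+1) → ℝ, z ∈ Icc a b → (ψ z : E) ∈ Binf x r₁ := by
    intro z hz i
    have h1 := hz.1 i
    have h2 := hz.2 i
    simp only [ha, hb] at h1 h2
    have : (ψ z : E) i = z i := rfl
    rw [this, abs_sub_le_iff]
    constructor <;> linarith
  have hIccU : ∀ z : Fin (m+1) → ℝ, z ∈ Icc a b → (ψ z : E) ∈ U := by intro z hz; exact hBU (hIccB z hz)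
  set v : Fin (m+1) → E := fun i => EuclideanSpace.single i (1:ℝ) with hv
  set g : E → (E →L[ℝ] ℝ) := fderiv ℝ h with hg
  have hg1 : ContDiffOn ℝ 1 g U := ContDiffOn.fderiv_of_isOpen (m := 1) hh hU (by norm_num)
  have hgc : ContinuousOn g U := hg1.continuousOn
  have hgc' : ContinuousOn (fderiv ℝ g) U := hg1.continuousOn_fderiv_of_isOpen hU le_rfl
  -- the vector field and its derivative
  set f : Fin (m+1) → (Fin (m+1) → ℝ) → ℝ := fun i z => g (ψ z) (v i) with hf
  set f' : Fin (m+1) → (Fin (m+1) → ℝ) → (Fin (m+1) → ℝ) →L[ℝ] ℝ := fun i z =>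
    ((ContinuousLinearMap.apply ℝ ℝ (v i)).comp (fderiv ℝ g (ψ z))).comp
      (ψ.toContinuousLinearMap) with hf'
  have hHd : ∀ z : Fin (m+1) → ℝ, (ψ z : E) ∈ U → ∀ i, HasFDerivAt (f i) (f' i z) z := by
    intro z hzU i
    have hgd : HasFDerivAt g (fderiv ℝ g (ψ z)) (ψ z) :=
      ((hg1.differentiableOn one_ne_zero).differentiableAt (hU.mem_nhds hzU)).hasFDerivAt
    have h1 : HasFDerivAt (fun w => g (ψ w)) ((fderiv ℝ g (ψ z)).comp ψ.toContinuousLinearMap) z :=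
      hgd.comp z ψ.hasFDerivAt
    exact (ContinuousLinearMap.apply ℝ ℝ (v i)).hasFDerivAt.comp z h1
  -- pointwise identification of the divergence with the laplacian
  have hdiv : ∀ z ∈ Icc a b, (∑ i, f' i z (Pi.single i 1)) = laplacian h (ψ z) := by
    intro z hz
    have hzU := hIccU z hz
    unfold laplacian
    refine Finset.sum_congr rfl fun i _ => ?_
    have hgd : HasFDerivAt g (fderiv ℝ g (ψ z)) (ψ z) :=
      ((hg1.differentiableOn one_ne_zero).differentiableAt (hU.mem_nhds hzU)).hasFDerivAt
    have h2 : HasFDerivAt (fun w => fderiv ℝ h w (v i))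
        ((ContinuousLinearMap.apply ℝ ℝ (v i)).comp (fderiv ℝ g (ψ z))) (ψ z) :=
      (ContinuousLinearMap.apply ℝ ℝ (v i)).hasFDerivAt.comp _ hgd
    rw [h2.fderiv]
    have : (ψ.toContinuousLinearMap (Pi.single i 1) : E) = v i := rfl
    simp only [hf', ContinuousLinearMap.comp_apply, this, hv]
  -- continuity hypotheses
  have Hc : ∀ i, ContinuousOn (f i) (Icc a b) := by
    intro i
    have h1 : ContinuousOn (fun z => g (ψ z)) (Icc a b) :=
      hgc.comp ψ.continuous.continuousOn (fun z hz => hIccU z hz)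
    exact (ContinuousLinearMap.apply ℝ ℝ (v i)).continuous.comp_continuousOn h1
  have Hi : IntegrableOn (fun z => ∑ i, f' i z (Pi.single i 1)) (Icc a b) := by
    apply ContinuousOn.integrableOn_compact isCompact_Icc
    apply continuousOn_finset_sum
    intro i _
    have h1 : ContinuousOn (fun z => fderiv ℝ g (ψ z)) (Icc a b) :=
      hgc'.comp ψ.continuous.continuousOn (fun z hz => hIccU z hz)
    have h2 : Continuous (fun T : EuclideanSpace ℝ (Fin (m+1)) →L[ℝ] (EuclideanSpace ℝ (Fin (m+1)) →L[ℝ] ℝ) => T (v i) (v i)) :=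
      (ContinuousLinearMap.apply ℝ ℝ (v i)).continuous.comp
        (ContinuousLinearMap.apply ℝ (EuclideanSpace ℝ (Fin (m+1)) →L[ℝ] ℝ) (v i)).continuous
    exact h2.comp_continuousOn h1
  -- divergence theorem
  have key := integral_divergence_of_hasFDerivAt_off_countable' a b hle f f' ∅
    countable_empty Hc
    (fun z hz i => hHd z (hIccU z ⟨fun j => (hz.1 j trivial).1.le, fun j => (hz.1 j trivial).2.le⟩) i)
    Hi
  -- transfer the integral from the euclidean ball to the pi Icc
  have hpre : (MeasurableEquiv.toLp 2 (Fin (m+1) → ℝ)).symm.symm ⁻¹' (Binf x r₁) = Icc a b := by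
    ext z
    constructor
    · intro hz
      refine ⟨fun i => ?_, fun i => ?_⟩ <;>
      · have h0 : |z i - x i| ≤ r₁ := hz i
        rw [abs_sub_le_iff] at h0
        simp only [ha, hb]
        linarith [h0.1, h0.2]
    · intro hz
      have h0 : ∀ i, |z i - x i| ≤ r₁ := by
        intro i
        have h1 := hz.1 i
        have h2 := hz.2 i
        simp only [ha, hb] at h1 h2
        rw [abs_sub_le_iff]
        constructor <;> linarith
      exact h0
  have hint : ∫ y in Binf x r₁, laplacian h y = ∫ z in Icc a b, laplacian h (ψ z) := by
    have hmp := MeasurePreserving.symm _ (EuclideanSpace.volume_preserving_symm_measurableEquiv_toLp (Fin (m+1)))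
    have h0 := hmp.setIntegral_preimage_emb (MeasurableEquiv.measurableEmbedding _) (laplacian h) (Binf x r₁)
    rw [hpre] at h0
    exact h0.symm
  have hIeq : ∫ z in Icc a b, (∑ i, f' i z (Pi.single i 1)) = ∫ z in Icc a b, laplacian h (ψ z) :=
    setIntegral_congr_fun measurableSet_Icc hdiv
  -- pointwise bound for f
  have hLnn : 0 ≤ L := le_trans (abs_nonneg _) (hL x (fun j => by simpa using hr₁.le) 0)
  have grad_eq : ∀ (y : EuclideanSpace ℝ (Fin (m+1))) (i : Fin (m+1)),
      fderiv ℝ h y (v i) = gradient h y i := by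
    intro y i
    have e1 : fderiv ℝ h y (v i) = inner ℝ (gradient h y) (EuclideanSpace.single i (1:ℝ)) := by
      rw [gradient, ← InnerProductSpace.toDual_apply_apply]
      simp [hv]
    rw [e1, EuclideanSpace.inner_single_right]
    simp
  have hface : ∀ (i : Fin (m+1)) (c : ℝ), c ∈ Icc (a i) (b i) →
      |∫ w in Icc (a ∘ i.succAbove) (b ∘ i.succAbove), f i (i.insertNth c w)| ≤ L * (2*r₁)^m := by
    intro i c hc
    have hvol : (volume (Icc (a ∘ i.succAbove) (b ∘ i.succAbove))).toReal = (2*r₁)^m := by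
      simp only [Function.comp_def]
      rw [Real.volume_Icc_pi_toReal (fun j => hle (i.succAbove j))]
      have : ∀ j : Fin m, b (i.succAbove j) - a (i.succAbove j) = 2*r₁ := by
        intro j; simp only [ha, hb]; ring
      rw [Finset.prod_congr rfl (fun j _ => this j), Finset.prod_const]
      simp
    have hb1 : |∫ w in Icc (a ∘ i.succAbove) (b ∘ i.succAbove), f i (i.insertNth c w)|
        ≤ L * (volume (Icc (a ∘ i.succAbove) (b ∘ i.succAbove))).toReal := by
      rw [← Real.norm_eq_abs]
      refine norm_setIntegral_le_of_norm_le_const measure_Icc_lt_top (fun w hw => ?_)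
      · have hp : i.insertNth c w ∈ Icc a b := Fin.insertNth_mem_Icc.2 ⟨hc, hw⟩
        have hyB := hIccB _ hp
        have : f i (i.insertNth c w) = gradient h (ψ (i.insertNth c w)) i := grad_eq _ i
        rw [Real.norm_eq_abs, this]
        exact hL _ hyB i
    rw [hvol] at hb1
    exact hb1
  -- bound the sum of face terms
  have hsum : (∑ i : Fin (m+1),
        ((∫ w in Icc (a ∘ i.succAbove) (b ∘ i.succAbove), f i (i.insertNth (b i) w)) -
         ∫ w in Icc (a ∘ i.succAbove) (b ∘ i.succAbove), f i (i.insertNth (a i) w)))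
      ≤ (m+1) * (2 * (L * (2*r₁)^m)) := by
    calc (∑ i : Fin (m+1),
        ((∫ w in Icc (a ∘ i.succAbove) (b ∘ i.succAbove), f i (i.insertNth (b i) w)) -
         ∫ w in Icc (a ∘ i.succAbove) (b ∘ i.succAbove), f i (i.insertNth (a i) w)))
        ≤ ∑ _i : Fin (m+1), (2 * (L * (2*r₁)^m)) := by
          refine Finset.sum_le_sum fun i _ => ?_
          have h1 := abs_le.1 (hface i (b i) ⟨hle i, le_rfl⟩)
          have h2 := abs_le.1 (hface i (a i) ⟨le_rfl, hle i⟩)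
          linarith [h1.1, h1.2, h2.1, h2.2]
      _ = (m+1) * (2 * (L * (2*r₁)^m)) := by
          rw [Finset.sum_const, Finset.card_univ, Fintype.card_fin]
          ring
  have hIle : ∫ y in Binf x r₁, laplacian h y ≤ (m+1) * (2 * (L * (2*r₁)^m)) := by
    rw [hint, ← hIeq]
    calc _ = _ := key
      _ ≤ _ := hsum
  have hpow : (0:ℝ) < (2*r₁)^(m+1) := pow_pos (by linarith) _
  have hr0 : r₁ ≠ 0 := ne_of_gt hr₁
  have hpm : ((2:ℝ)*r₁)^m ≠ 0 := pow_ne_zero _ (by positivity)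
  calc ((2 * r₁) ^ (m+1))⁻¹ * ∫ y in Binf x r₁, laplacian h y
      ≤ ((2 * r₁) ^ (m+1))⁻¹ * ((m+1) * (2 * (L * (2*r₁)^m))) :=
        mul_le_mul_of_nonneg_left hIle (inv_nonneg.2 hpow.le)
    _ = (m+1) * L / r₁ := by
        rw [pow_succ]
        field_simp

/-- If `h` is twice continuously differentiable on an open neighborhood of
`B_∞(x, r₁)` and `‖∇h(y)‖_∞ ≤ L` on `B_∞(x, r₁)`, then the average of the Laplacian of `h`
over `B_∞(x, r₁)` is at most `n L / r₁`. -/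
theorem stmt2 {n : ℕ} (hn : 1 ≤ n) (r₁ L : ℝ) (hr₁ : 0 < r₁)
    (x : EuclideanSpace ℝ (Fin n)) (h : EuclideanSpace ℝ (Fin n) → ℝ)
    (U : Set (EuclideanSpace ℝ (Fin n))) (hU : IsOpen U) (hBU : Binf x r₁ ⊆ U)
    (hh : ContDiffOn ℝ 2 h U)
    (hL : ∀ y ∈ Binf x r₁, ∀ i, |gradient h y i| ≤ L) :
    ((2 * r₁) ^ n)⁻¹ * ∫ y in Binf x r₁, laplacian h y ≤ n * L / r₁ := by
  obtain ⟨m, rfl⟩ : ∃ m, n = m + 1 := ⟨n - 1, (Nat.succ_pred_eq_of_pos hn).symm⟩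
  have H := stmt2' r₁ L hr₁ x h U hU hBU hh hL
  exact_mod_cast H
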